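/- For any positive integers r, h, w there exists a positive integer s = s(r,h,w) such that: for every graph G with no K_{r,r}-subgraph, and collections C₁, C₂ each consisting of pairwise disjoint subsets of V(G) of size at most h, if |C₁| ≥ s and |C₂| ≥ s, then there exist C₁' ⊆ C₁ and C₂' ⊆ C₂ with |C₁'| = |C₂'| = w such that every member of C₁' is disjoint from and non-adjacent in G to every member of C₂'. -/

import Mathlib

/-- Bipartite Ramsey: any coloring of a large enough grid by a finite type
contains a monochromatic `a × b` rectangle. -/
theorem bipRamsey (γ : Type) [Fintype γ] [DecidableEq γ] [Nonempty γ] (a b : ℕ) :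
    ∃ N : ℕ, 0 < N ∧ ∀ (α β : Type) [DecidableEq α] [DecidableEq β]
      (X : Finset α) (Y : Finset β) (f : α → β → γ), N ≤ X.card → N ≤ Y.card →
      ∃ I ⊆ X, ∃ J ⊆ Y, I.card = a ∧ J.card = b ∧
        ∃ k : γ, ∀ i ∈ I, ∀ j ∈ J, f i j = k := by
  classical
  set c := Fintype.card γ with hc
  set N₁ := c * a + 1 with hN₁
  set N₂ := (N₁.choose a * c) * b + 1 with hN₂
  refine ⟨max N₁ N₂, lt_of_lt_of_le (Nat.succ_pos _) (le_max_left _ _), ?_⟩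
  intro α β _ _ X Y f hX hY
  obtain ⟨X', hX'sub, hX'card⟩ := Finset.exists_subset_card_eq
    (le_trans (le_max_left N₁ N₂) hX)
  obtain ⟨Y', hY'sub, hY'card⟩ := Finset.exists_subset_card_eq
    (le_trans (le_max_right N₁ N₂) hY)
  -- step 1: for each y, find a monochromatic column piece of size a
  have step1 : ∀ y : β, ∃ (k : γ) (I : Finset α), y ∈ Y' →
      I ⊆ X' ∧ I.card = a ∧ ∀ x ∈ I, f x y = k := by
    intro y
    by_cases hy : y ∈ Y'
    · obtain ⟨k, _, hk⟩ := Finset.exists_lt_card_fiber_of_mul_lt_card_of_maps_to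
        (s := X') (t := (Finset.univ : Finset γ)) (f := fun x => f x y) (n := a)
        (fun x _ => Finset.mem_univ _) (by
          rw [hX'card, Finset.card_univ]; simp only [hN₁, hc]; omega)
      obtain ⟨I, hIsub, hIcard⟩ := Finset.exists_subset_card_eq (le_of_lt hk)
      refine ⟨k, I, fun _ => ⟨hIsub.trans (Finset.filter_subset _ _), hIcard, ?_⟩⟩
      intro x hx
      exact (Finset.mem_filter.1 (hIsub hx)).2
    · exact ⟨Classical.arbitrary γ, ∅, fun h => absurd h hy⟩
  choose k I hkI using step1
  -- step 2: pigeonhole over columns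
  obtain ⟨⟨I₀, k₀⟩, _, hfib⟩ := Finset.exists_lt_card_fiber_of_mul_lt_card_of_maps_to
    (s := Y') (t := (X'.powersetCard a) ×ˢ (Finset.univ : Finset γ))
    (f := fun y => (I y, k y)) (n := b)
    (by
      intro y hy
      obtain ⟨h1, h2, _⟩ := hkI y hy
      exact Finset.mem_product.2 ⟨Finset.mem_powersetCard.2 ⟨h1, h2⟩, Finset.mem_univ _⟩)
    (by
      rw [Finset.card_product, Finset.card_powersetCard, Finset.card_univ, hX'card,
        hY'card]
      simp only [hN₂, hN₁, hc]
      omega)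
  obtain ⟨J, hJsub, hJcard⟩ := Finset.exists_subset_card_eq (le_of_lt hfib)
  have hJY' : J ⊆ Y' := hJsub.trans (Finset.filter_subset _ _)
  -- J is nonempty iff b > 0; we need I₀ props. If b = 0, pick J = ∅ and any I of card a?
  by_cases hb : b = 0
  · obtain ⟨I', hI'sub, hI'card⟩ := Finset.exists_subset_card_eq
      (show a ≤ X'.card by
        rw [hX'card, hN₁]
        calc a ≤ c * a := Nat.le_mul_of_pos_left a (hc ▸ Fintype.card_pos)
        _ ≤ c * a + 1 := Nat.le_succ _)
    exact ⟨I', hI'sub.trans hX'sub, ∅, Finset.empty_subset _, hI'card,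
      by simp [hb], Classical.arbitrary γ, by simp⟩
  · have hJne : J.Nonempty := Finset.card_pos.1 (by omega)
    obtain ⟨y₀, hy₀⟩ := hJne
    have hy₀' : (I y₀, k y₀) = (I₀, k₀) :=
      (Finset.mem_filter.1 (hJsub hy₀)).2
    have hy₀Y' := hJY' hy₀
    obtain ⟨hI₀sub, hI₀card, _⟩ := hkI y₀ hy₀Y'
    refine ⟨I₀, ?_, J, hJY'.trans hY'sub, ?_, hJcard, k₀, ?_⟩
    · rw [← (Prod.mk.injEq .. ▸ hy₀' : I y₀ = I₀ ∧ k y₀ = k₀).1]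
      exact hI₀sub.trans hX'sub
    · rw [← (Prod.mk.injEq .. ▸ hy₀' : I y₀ = I₀ ∧ k y₀ = k₀).1]; exact hI₀card
    · intro i hi j hj
      have hjY' := hJY' hj
      have hj' : (I j, k j) = (I₀, k₀) := (Finset.mem_filter.1 (hJsub hj)).2
      obtain ⟨hsub, hcard, hmono⟩ := hkI j hjY'
      have h1 : I j = I₀ := congrArg Prod.fst hj'
      have h2 : k j = k₀ := congrArg Prod.snd hj'
      rw [← h2]
      exact hmono i (h1 ▸ hi)

/-- Index of an element in a finset, as an element of `Fin h` when the finset has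
card at most `h`. -/
noncomputable def vidx {α : Type} [DecidableEq α] (h : ℕ) (hh : 0 < h) (S : Finset α)
    (x : α) : Fin h :=
  if hx : x ∈ S ∧ S.card ≤ h then
    ⟨S.toList.idxOf x, by
      have h1 := List.idxOf_lt_length_iff.2 (Finset.mem_toList.2 hx.1)
      rw [Finset.length_toList] at h1
      omega⟩
  else ⟨0, hh⟩

lemma vidx_inj {α : Type} [DecidableEq α] {h : ℕ} (hh : 0 < h) {S : Finset α}
    (hS : S.card ≤ h) {x y : α} (hx : x ∈ S) (hy : y ∈ S)
    (hxy : vidx h hh S x = vidx h hh S y) : x = y := by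
  unfold vidx at hxy
  rw [dif_pos ⟨hx, hS⟩, dif_pos ⟨hy, hS⟩] at hxy
  have h1 : S.toList.idxOf x = S.toList.idxOf y := congrArg Fin.val hxy
  have hlx : S.toList.idxOf x < S.toList.length :=
    List.idxOf_lt_length_iff.2 (Finset.mem_toList.2 hx)
  have hly : S.toList.idxOf y < S.toList.length :=
    List.idxOf_lt_length_iff.2 (Finset.mem_toList.2 hy)
  have h2 : S.toList.get ⟨S.toList.idxOf x, hlx⟩ = S.toList.get ⟨S.toList.idxOf y, hly⟩ := by
    congr 1
    exact Fin.ext h1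
  rwa [List.idxOf_get, List.idxOf_get] at h2

/-- For any positive integers `r, h, w` there exists `s = s(r,h,w)` such that: for every
graph `G` with no `K_{r,r}`-subgraph and collections `C₁, C₂`, each of pairwise disjoint
vertex subsets of size at most `h`, with `|C₁|, |C₂| ≥ s`, there exist `C₁' ⊆ C₁` and
`C₂' ⊆ C₂` with `|C₁'| = |C₂'| = w` such that every member of `C₁'` is disjoint from and
non-adjacent in `G` to every member of `C₂'`. -/
theorem stmt7 (r h w : ℕ) (hr : 0 < r) (hh : 0 < h) (hw : 0 < w) :
    ∃ s : ℕ, 0 < s ∧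
      ∀ (W : Type) [Fintype W] [DecidableEq W] (G : SimpleGraph W),
        (¬ ∃ A B : Finset W, A.card = r ∧ B.card = r ∧ Disjoint A B ∧
            ∀ a ∈ A, ∀ b ∈ B, G.Adj a b) →
        ∀ C₁ C₂ : Finset (Finset W),
          ((C₁ : Set (Finset W)).Pairwise fun S T => Disjoint S T) →
          ((C₂ : Set (Finset W)).Pairwise fun S T => Disjoint S T) →
          (∀ S ∈ C₁, S.card ≤ h) → (∀ T ∈ C₂, T.card ≤ h) →
          s ≤ C₁.card → s ≤ C₂.card →
          ∃ C₁' ⊆ C₁, ∃ C₂' ⊆ C₂, C₁'.card = w ∧ C₂'.card = w ∧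
            ∀ S ∈ C₁', ∀ T ∈ C₂', Disjoint S T ∧ ∀ a ∈ S, ∀ b ∈ T, ¬ G.Adj a b := by
  classical
  haveI : Nonempty (Fin h × Fin h) := ⟨⟨0, hh⟩, ⟨0, hh⟩⟩
  obtain ⟨R1, hR1pos, hR1⟩ := bipRamsey (Fin h × Fin h) r r
  set u := max (max (h + 1) R1) w with hu
  obtain ⟨s, hspos, hs⟩ := bipRamsey (Fin 3) u u
  refine ⟨s, hspos, ?_⟩
  intro W _ _ G hK C₁ C₂ hP₁ hP₂ hb₁ hb₂ hc₁ hc₂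
  set f : Finset W → Finset W → Fin 3 := fun S T =>
    if ¬ Disjoint S T then 0 else if (∃ a ∈ S, ∃ b ∈ T, G.Adj a b) then 1 else 2 with hf
  have fval : ∀ S T, ((f S T).val = 0 → ¬ Disjoint S T) ∧
      ((f S T).val = 1 → Disjoint S T ∧ ∃ a ∈ S, ∃ b ∈ T, G.Adj a b) ∧
      ((f S T).val = 2 → Disjoint S T ∧ ¬ ∃ a ∈ S, ∃ b ∈ T, G.Adj a b) := by
    intro S T
    simp only [hf]
    split_ifs with h1 h2
    · exact ⟨fun hv => absurd hv (by decide), fun _ => ⟨h1, h2⟩,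
        fun hv => absurd hv (by decide)⟩
    · exact ⟨fun hv => absurd hv (by decide), fun hv => absurd hv (by decide),
        fun _ => ⟨h1, h2⟩⟩
    · exact ⟨fun _ => h1, fun hv => absurd hv (by decide), fun hv => absurd hv (by decide)⟩
  obtain ⟨I, hIsub, J, hJsub, hIcard, hJcard, k, hk⟩ :=
    hs (Finset W) (Finset W) C₁ C₂ f hc₁ hc₂
  rcases k with ⟨kv, hkv⟩
  have hkval : ∀ S ∈ I, ∀ T ∈ J, (f S T).val = kv := by
    intro S hS T hT
    exact congrArg Fin.val (hk S hS T hT)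
  interval_cases kv
  · -- all pairs intersect : contradiction
    exfalso
    have hIne : I.Nonempty := Finset.card_pos.1 (by rw [hIcard]; omega)
    obtain ⟨S, hS⟩ := hIne
    have hJne : J.Nonempty := Finset.card_pos.1 (by rw [hJcard]; omega)
    obtain ⟨T₀, hT₀⟩ := hJne
    obtain ⟨x₀, _, _⟩ := Finset.not_disjoint_iff.1 ((fval S T₀).1 (hkval S hS T₀ hT₀))
    haveI : Nonempty W := ⟨x₀⟩
    have hx : ∀ T, ∃ x, T ∈ J → x ∈ S ∧ x ∈ T := by
      intro T
      by_cases hT : T ∈ J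
      · obtain ⟨x, hx1, hx2⟩ := Finset.not_disjoint_iff.1 ((fval S T).1 (hkval S hS T hT))
        exact ⟨x, fun _ => ⟨hx1, hx2⟩⟩
      · exact ⟨Classical.arbitrary W, fun hc => absurd hc hT⟩
    choose x hxm using hx
    have hinj : Set.InjOn x J := by
      intro T hT T' hT' hxx
      by_contra hne
      have hdis := hP₂ (hJsub hT) (hJsub hT') hne
      exact (Finset.disjoint_left.1 hdis (hxm T hT).2) (hxx ▸ (hxm T' hT').2)
    have hle : J.card ≤ S.card :=
      Finset.card_le_card_of_injOn x (fun T hT => (hxm T hT).1) hinj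
    have hS' := hb₁ S (hIsub hS)
    rw [hJcard] at hle
    have : h + 1 ≤ u := le_trans (le_max_left _ _) (le_max_left _ _)
    omega
  · -- all pairs adjacent : contradiction with no K_{r,r}
    exfalso
    have hu1 : R1 ≤ u := le_trans (le_max_right _ _) (le_max_left _ _)
    obtain ⟨I1, hI1sub, hI1card⟩ := Finset.exists_subset_card_eq
      (show R1 ≤ I.card by rw [hIcard]; exact hu1)
    obtain ⟨J1, hJ1sub, hJ1card⟩ := Finset.exists_subset_card_eq
      (show R1 ≤ J.card by rw [hJcard]; exact hu1)
    have hI1ne : I1.Nonempty := Finset.card_pos.1 (by omega)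
    have hJ1ne : J1.Nonempty := Finset.card_pos.1 (by omega)
    obtain ⟨Sx, hSx⟩ := hI1ne
    obtain ⟨Tx, hTx⟩ := hJ1ne
    obtain ⟨_, ax, haxm, bx, _, _⟩ :=
      (fval Sx Tx).2.1 (hkval Sx (hI1sub hSx) Tx (hJ1sub hTx))
    haveI : Nonempty W := ⟨ax⟩
    have hab : ∀ S T, ∃ p : W × W, S ∈ I1 → T ∈ J1 →
        p.1 ∈ S ∧ p.2 ∈ T ∧ G.Adj p.1 p.2 := by
      intro S T
      by_cases hST : S ∈ I1 ∧ T ∈ J1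
      · obtain ⟨_, a, ha, b, hb, hadj⟩ :=
          (fval S T).2.1 (hkval S (hI1sub hST.1) T (hJ1sub hST.2))
        exact ⟨(a, b), fun _ _ => ⟨ha, hb, hadj⟩⟩
      · exact ⟨Classical.arbitrary _, fun h1 h2 => absurd ⟨h1, h2⟩ hST⟩
    choose p hp using hab
    set g : Finset W → Finset W → Fin h × Fin h := fun S T =>
      (vidx h hh S (p S T).1, vidx h hh T (p S T).2) with hg
    obtain ⟨I2, hI2sub, J2, hJ2sub, hI2card, hJ2card, ⟨q1, q2⟩, hq⟩ :=
      hR1 (Finset W) (Finset W) I1 J1 g (by omega) (by omega)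
    have hI2ne : I2.Nonempty := Finset.card_pos.1 (by omega)
    have hJ2ne : J2.Nonempty := Finset.card_pos.1 (by omega)
    obtain ⟨S₀, hS₀⟩ := hI2ne
    obtain ⟨T₀, hT₀⟩ := hJ2ne
    -- the chosen endpoint in S does not depend on T
    have haconst : ∀ S ∈ I2, ∀ T ∈ J2, (p S T).1 = (p S T₀).1 := by
      intro S hS T hT
      have h1 : vidx h hh S (p S T).1 = q1 := congrArg Prod.fst (hq S hS T hT)
      have h2 : vidx h hh S (p S T₀).1 = q1 := congrArg Prod.fst (hq S hS T₀ hT₀)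
      have hm1 := (hp S T (hI2sub hS) (hJ2sub hT)).1
      have hm2 := (hp S T₀ (hI2sub hS) (hJ2sub hT₀)).1
      exact vidx_inj hh (hb₁ S (hIsub (hI1sub (hI2sub hS)))) hm1 hm2 (h1.trans h2.symm)
    have hbconst : ∀ S ∈ I2, ∀ T ∈ J2, (p S T).2 = (p S₀ T).2 := by
      intro S hS T hT
      have h1 : vidx h hh T (p S T).2 = q2 := congrArg Prod.snd (hq S hS T hT)
      have h2 : vidx h hh T (p S₀ T).2 = q2 := congrArg Prod.snd (hq S₀ hS₀ T hT)
      have hm1 := (hp S T (hI2sub hS) (hJ2sub hT)).2.1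
      have hm2 := (hp S₀ T (hI2sub hS₀) (hJ2sub hT)).2.1
      exact vidx_inj hh (hb₂ T (hJsub (hJ1sub (hJ2sub hT)))) hm1 hm2 (h1.trans h2.symm)
    have hadjAll : ∀ S ∈ I2, ∀ T ∈ J2, G.Adj (p S T₀).1 (p S₀ T).2 := by
      intro S hS T hT
      have := (hp S T (hI2sub hS) (hJ2sub hT)).2.2
      rwa [haconst S hS T hT, hbconst S hS T hT] at this
    set A : Finset W := I2.image fun S => (p S T₀).1 with hA
    set B : Finset W := J2.image fun T => (p S₀ T).2 with hB
    have hmemA : ∀ S ∈ I2, (p S T₀).1 ∈ S := fun S hS =>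
      (hp S T₀ (hI2sub hS) (hJ2sub hT₀)).1
    have hmemB : ∀ T ∈ J2, (p S₀ T).2 ∈ T := fun T hT =>
      (hp S₀ T (hI2sub hS₀) (hJ2sub hT)).2.1
    have hAinj : Set.InjOn (fun S => (p S T₀).1) I2 := by
      intro S hS S' hS' hxx
      by_contra hne
      have hdis := hP₁ (hIsub (hI1sub (hI2sub hS))) (hIsub (hI1sub (hI2sub hS'))) hne
      have hxx' : (p S T₀).1 = (p S' T₀).1 := hxx
      have h3 := hmemA S' hS'
      rw [← hxx'] at h3
      exact (Finset.disjoint_left.1 hdis (hmemA S hS)) h3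
    have hBinj : Set.InjOn (fun T => (p S₀ T).2) J2 := by
      intro T hT T' hT' hxx
      by_contra hne
      have hdis := hP₂ (hJsub (hJ1sub (hJ2sub hT))) (hJsub (hJ1sub (hJ2sub hT'))) hne
      have hxx' : (p S₀ T).2 = (p S₀ T').2 := hxx
      have h3 := hmemB T' hT'
      rw [← hxx'] at h3
      exact (Finset.disjoint_left.1 hdis (hmemB T hT)) h3
    refine hK ⟨A, B, ?_, ?_, ?_, ?_⟩
    · rw [hA, Finset.card_image_of_injOn hAinj, hI2card]
    · rw [hB, Finset.card_image_of_injOn hBinj, hJ2card]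
    · rw [Finset.disjoint_left]
      intro x hxA hxB
      obtain ⟨S, hS, hxS⟩ := Finset.mem_image.1 hxA
      obtain ⟨T, hT, hxT⟩ := Finset.mem_image.1 hxB
      have hadj := hadjAll S hS T hT
      rw [hxS, hxT] at hadj
      exact G.loopless.irrefl x hadj
    · intro a ha b hbm
      obtain ⟨S, hS, hxS⟩ := Finset.mem_image.1 ha
      obtain ⟨T, hT, hxT⟩ := Finset.mem_image.1 hbm
      have hadj := hadjAll S hS T hT
      rwa [hxS, hxT] at hadj
  · -- good case
    have huw : w ≤ u := le_max_right _ _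
    obtain ⟨I', hI'sub, hI'card⟩ := Finset.exists_subset_card_eq
      (show w ≤ I.card by rw [hIcard]; exact huw)
    obtain ⟨J', hJ'sub, hJ'card⟩ := Finset.exists_subset_card_eq
      (show w ≤ J.card by rw [hJcard]; exact huw)
    refine ⟨I', hI'sub.trans hIsub, J', hJ'sub.trans hJsub, hI'card, hJ'card, ?_⟩
    intro S hS T hT
    obtain ⟨hdis, hnadj⟩ := (fval S T).2.2 (hkval S (hI'sub hS) T (hJ'sub hT))
    refine ⟨hdis, ?_⟩
    intro a ha b hbm hadj
    exact hnadj ⟨a, ha, b, hbm, hadj⟩
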